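/- Let ψ : ℕ → ℤ → ℝ, ω : ℕ → ℤ → ℝ, S : ℕ → ℝ → ℝ, and constants K ≥ 0, C̄, D̄, L̄ ≥ 0, T, R > 0, and nonnegative sequences C, D, L : ℕ → ℝ satisfy: (i) Σ_{n∈ℤ} ψ_j(n)² ≤ 1 for every j, and ψ_j(n) = 0 whenever |n| > K·2^j; (ii) |ω_{j,m}² − S_j(m/T)| ≤ C_j/T + D_j/R for all j ∈ ℕ and m ∈ ℤ; (iii) |S_j(x) − S_j(y)| ≤ L_j·|x−y| for all x, y; (iv) Σ_j C_j ≤ C̄, Σ_j D_j ≤ D̄, Σ_j 2^j·L_j ≤ L̄; (v) for fixed k, τ ∈ ℤ the doubly indexed family (j,n) ↦ ω_{j,n+k}²·|ψ_j(n)·ψ_j(n−τ)| is summable and Σ_j |S_j(k/T)| < ∞. Define the autocorrelation wavelet Ψ_j(τ) = Σ_{n∈ℤ} ψ_j(n)·ψ_j(n−τ). Then for all k, τ ∈ ℤ: |Σ_{j∈ℕ} Σ_{n∈ℤ} ω_{j,n+k}²·ψ_j(n)·ψ_j(n−τ) − Σ_{j∈ℕ} S_j(k/T)·Ψ_j(τ)|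 ≤ (C̄ + K·L̄)/T + D̄/R. -/

import Mathlib

/-- deterministic core of the autocovariance approximation: the process
autocovariance `Σ_j Σ_n ω²_{j,n+k} ψ_j(n)ψ_j(n−τ)` is within `(C̄+K·L̄)/T + D̄/R`
of the local autocovariance `Σ_j S_j(k/T)·Ψ_j(τ)`. -/
theorem autocovariance_approximation (ψ : ℕ → ℤ → ℝ) (ω : ℕ → ℤ → ℝ)
    (S : ℕ → ℝ → ℝ) (K Cb Db Lb : ℝ)
    (hK : 0 ≤ K) (hCb : 0 ≤ Cb) (hDb : 0 ≤ Db) (hLb : 0 ≤ Lb)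
    (T R : ℝ) (hT : 0 < T) (hR : 0 < R)
    (C D L : ℕ → ℝ) (hC : ∀ j, 0 ≤ C j) (hD : ∀ j, 0 ≤ D j) (hL : ∀ j, 0 ≤ L j)
    (hψsq : ∀ j, Summable (fun n : ℤ => ψ j n ^ 2))
    (hψnorm : ∀ j : ℕ, ∑' n : ℤ, ψ j n ^ 2 ≤ 1)
    (hψsupp : ∀ (j : ℕ) (n : ℤ), K * 2 ^ j < |(n : ℝ)| → ψ j n = 0)
    (hamp : ∀ (j : ℕ) (m : ℤ), |ω j m ^ 2 - S j ((m : ℝ) / T)| ≤ C j / T + D j / R)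
    (hSlip : ∀ (j : ℕ) (x y : ℝ), |S j x - S j y| ≤ L j * |x - y|)
    (hCs : Summable C) (hCsum : ∑' j : ℕ, C j ≤ Cb)
    (hDs : Summable D) (hDsum : ∑' j : ℕ, D j ≤ Db)
    (hLs : Summable (fun j : ℕ => 2 ^ j * L j))
    (hLsum : ∑' j : ℕ, 2 ^ j * L j ≤ Lb)
    (k τ : ℤ)
    (hωsum : Summable
      (fun p : ℕ × ℤ => ω p.1 (p.2 + k) ^ 2 * |ψ p.1 p.2 * ψ p.1 (p.2 - τ)|))
    (hSsum : Summable (fun j : ℕ => |S j ((k : ℝ) / T)|)) :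
    |(∑' j : ℕ, ∑' n : ℤ, ω j (n + k) ^ 2 * (ψ j n * ψ j (n - τ))) -
        ∑' j : ℕ, S j ((k : ℝ) / T) * ∑' n : ℤ, ψ j n * ψ j (n - τ)|
      ≤ (Cb + K * Lb) / T + Db / R := by
  set a : ℕ → ℤ → ℝ := fun j n => ω j (n + k) ^ 2 * (ψ j n * ψ j (n - τ)) with ha_def
  set b : ℕ → ℤ → ℝ := fun j n => S j ((k : ℝ) / T) * (ψ j n * ψ j (n - τ)) with hb_def
  set E : ℕ → ℝ := fun j => C j / T + D j / R + K * 2 ^ j * L j / T with hE_def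
  have hE0 : ∀ j, 0 ≤ E j := by
    intro j
    have h1 : (0:ℝ) ≤ C j / T := div_nonneg (hC j) hT.le
    have h2 : (0:ℝ) ≤ D j / R := div_nonneg (hD j) hR.le
    have h3 : (0:ℝ) ≤ K * 2 ^ j * L j / T :=
      div_nonneg (mul_nonneg (mul_nonneg hK (by positivity)) (hL j)) hT.le
    simp only [hE_def]; linarith
  -- shifted square summability
  have hψsq' : ∀ j, Summable (fun n : ℤ => ψ j (n - τ) ^ 2) := by
    intro j
    exact ((Equiv.subRight τ).summable_iff (f := fun n : ℤ => ψ j n ^ 2)).2 (hψsq j)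
  have hψsq'sum : ∀ j, ∑' n : ℤ, ψ j (n - τ) ^ 2 = ∑' n : ℤ, ψ j n ^ 2 := by
    intro j
    exact (Equiv.subRight τ).tsum_eq (fun n : ℤ => ψ j n ^ 2)
  -- summability of |ψ j n * ψ j (n-τ)|
  have habs_le : ∀ (j : ℕ) (n : ℤ),
      |ψ j n * ψ j (n - τ)| ≤ (ψ j n ^ 2 + ψ j (n - τ) ^ 2) / 2 := by
    intro j n
    have := abs_mul (ψ j n) (ψ j (n - τ))
    nlinarith [sq_abs (ψ j n), sq_abs (ψ j (n - τ)), sq_nonneg (|ψ j n| - |ψ j (n - τ)|),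
      abs_nonneg (ψ j n), abs_nonneg (ψ j (n - τ))]
  have hprodabs : ∀ j, Summable (fun n : ℤ => |ψ j n * ψ j (n - τ)|) := by
    intro j
    refine Summable.of_nonneg_of_le (fun n => abs_nonneg _) (habs_le j) ?_
    exact ((hψsq j).add (hψsq' j)).div_const 2
  have hΨle : ∀ j, ∑' n : ℤ, |ψ j n * ψ j (n - τ)| ≤ 1 := by
    intro j
    have h1 : ∑' n : ℤ, |ψ j n * ψ j (n - τ)|
        ≤ ∑' n : ℤ, (ψ j n ^ 2 + ψ j (n - τ) ^ 2) / 2 :=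
      Summable.tsum_le_tsum (habs_le j) (hprodabs j) (((hψsq j).add (hψsq' j)).div_const 2)
    have h2 : ∑' n : ℤ, (ψ j n ^ 2 + ψ j (n - τ) ^ 2) / 2
        = ((∑' n : ℤ, ψ j n ^ 2) + ∑' n : ℤ, ψ j (n - τ) ^ 2) / 2 := by
      rw [tsum_div_const, Summable.tsum_add (hψsq j) (hψsq' j)]
    have := hψnorm j
    rw [h2, hψsq'sum j] at h1
    linarith
  have hprodsum : ∀ j, Summable (fun n : ℤ => ψ j n * ψ j (n - τ)) :=
    fun j => (hprodabs j).of_abs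
  -- fiberwise summability for a
  have hfj : ∀ j, Summable (fun n : ℤ => ω j (n + k) ^ 2 * |ψ j n * ψ j (n - τ)|) :=
    fun j => hωsum.prod_factor j
  have hasum : ∀ j, Summable (fun n : ℤ => a j n) := by
    intro j
    apply Summable.of_abs
    have : (fun n : ℤ => |a j n|) = fun n : ℤ => ω j (n + k) ^ 2 * |ψ j n * ψ j (n - τ)| := by
      funext n
      simp only [ha_def, abs_mul, abs_of_nonneg (sq_nonneg (ω j (n + k)))]
    rw [this]; exact hfj j
  have hbsum : ∀ j, Summable (fun n : ℤ => b j n) :=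
    fun j => (hprodsum j).mul_left _
  -- pointwise bound on |a - b|
  have hd : ∀ (j : ℕ) (n : ℤ), |a j n - b j n| ≤ E j * |ψ j n * ψ j (n - τ)| := by
    intro j n
    by_cases hz : ψ j n = 0
    · simp [ha_def, hb_def, hz, mul_nonneg (hE0 j) (abs_nonneg (ψ j (n - τ)))]
    · have hn : |(n : ℝ)| ≤ K * 2 ^ j := by
        by_contra h
        exact hz (hψsupp j n (lt_of_not_ge h))
      have key : |ω j (n + k) ^ 2 - S j ((k : ℝ) / T)| ≤ E j := by
        have h1 := hamp j (n + k)
        have h2 := hSlip j (((n + k : ℤ) : ℝ) / T) ((k : ℝ) / T)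
        have h3 : |((n + k : ℤ) : ℝ) / T - (k : ℝ) / T| = |(n : ℝ)| / T := by
          have he : ((n + k : ℤ) : ℝ) / T - (k : ℝ) / T = (n : ℝ) / T := by
            push_cast; ring
          rw [he, abs_div, abs_of_pos hT]
        rw [h3] at h2
        have h4 : L j * (|(n : ℝ)| / T) ≤ L j * (K * 2 ^ j / T) := by
          apply mul_le_mul_of_nonneg_left _ (hL j)
          gcongr
        calc |ω j (n + k) ^ 2 - S j ((k : ℝ) / T)|
            ≤ |ω j (n + k) ^ 2 - S j (((n + k : ℤ) : ℝ) / T)|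
              + |S j (((n + k : ℤ) : ℝ) / T) - S j ((k : ℝ) / T)| := abs_sub_le _ _ _
          _ ≤ (C j / T + D j / R) + L j * (|(n : ℝ)| / T) := add_le_add h1 h2
          _ ≤ (C j / T + D j / R) + L j * (K * 2 ^ j / T) := by linarith
          _ = E j := by simp only [hE_def]; ring
      calc |a j n - b j n|
          = |ω j (n + k) ^ 2 - S j ((k : ℝ) / T)| * |ψ j n * ψ j (n - τ)| := by
            rw [← abs_mul]; congr 1; simp only [ha_def, hb_def]; ring
        _ ≤ E j * |ψ j n * ψ j (n - τ)| :=
            mul_le_mul_of_nonneg_right key (abs_nonneg _)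
  -- define the fiber sums
  set A : ℕ → ℝ := fun j => ∑' n : ℤ, a j n with hA_def
  set B : ℕ → ℝ := fun j => S j ((k : ℝ) / T) * ∑' n : ℤ, ψ j n * ψ j (n - τ) with hB_def
  have hB_eq : ∀ j, B j = ∑' n : ℤ, b j n := by
    intro j; simp only [hB_def, hb_def]; rw [tsum_mul_left]
  -- per-j bound
  have hABsummable : ∀ j, Summable (fun n : ℤ => |a j n - b j n|) := by
    intro j
    exact Summable.of_nonneg_of_le (fun n => abs_nonneg _) (hd j) ((hprodabs j).mul_left (E j))
  have hper : ∀ j, |A j - B j| ≤ E j := by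
    intro j
    rw [hB_eq j, ← Summable.tsum_sub (hasum j) (hbsum j)]
    calc |∑' n : ℤ, (a j n - b j n)| ≤ ∑' n : ℤ, |a j n - b j n| := by
          simpa using norm_tsum_le_tsum_norm (f := fun n : ℤ => a j n - b j n)
            (by simpa using hABsummable j)
      _ ≤ ∑' n : ℤ, E j * |ψ j n * ψ j (n - τ)| :=
          Summable.tsum_le_tsum (hd j) (hABsummable j) ((hprodabs j).mul_left (E j))
      _ = E j * ∑' n : ℤ, |ψ j n * ψ j (n - τ)| := tsum_mul_left
      _ ≤ E j * 1 := mul_le_mul_of_nonneg_left (hΨle j) (hE0 j)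
      _ = E j := mul_one _
  -- summability of A
  have hg : Summable (fun j : ℕ => ∑' n : ℤ, ω j (n + k) ^ 2 * |ψ j n * ψ j (n - τ)|) := by
    exact ⟨_, hωsum.hasSum.prod_fiberwise (fun j => (hfj j).hasSum)⟩
  have hAsum : Summable A := by
    apply Summable.of_norm_bounded hg
    intro j
    calc ‖A j‖ = |∑' n : ℤ, a j n| := rfl
      _ ≤ ∑' n : ℤ, |a j n| := by
          simpa using norm_tsum_le_tsum_norm (f := fun n : ℤ => a j n)
            (by
              have : (fun n : ℤ => ‖a j n‖)
                  = fun n : ℤ => ω j (n + k) ^ 2 * |ψ j n * ψ j (n - τ)| := by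
                funext n
                simp only [ha_def, Real.norm_eq_abs, abs_mul,
                  abs_of_nonneg (sq_nonneg (ω j (n + k)))]
              rw [this]; exact hfj j)
      _ = ∑' n : ℤ, ω j (n + k) ^ 2 * |ψ j n * ψ j (n - τ)| := by
          congr 1; funext n
          simp only [ha_def, abs_mul, abs_of_nonneg (sq_nonneg (ω j (n + k)))]
  -- summability of B
  have hBsum : Summable B := by
    apply Summable.of_norm_bounded hSsum
    intro j
    calc ‖B j‖ = |S j ((k : ℝ) / T)| * |∑' n : ℤ, ψ j n * ψ j (n - τ)| := by
          simp [hB_def, abs_mul]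
      _ ≤ |S j ((k : ℝ) / T)| * 1 := by
          apply mul_le_mul_of_nonneg_left _ (abs_nonneg _)
          calc |∑' n : ℤ, ψ j n * ψ j (n - τ)| ≤ ∑' n : ℤ, |ψ j n * ψ j (n - τ)| := by
                simpa only [Real.norm_eq_abs] using
                  norm_tsum_le_tsum_norm (f := fun n : ℤ => ψ j n * ψ j (n - τ))
                  (by simpa only [Real.norm_eq_abs] using hprodabs j)
            _ ≤ 1 := hΨle j
      _ = |S j ((k : ℝ) / T)| := mul_one _
  -- summability of E
  have hEs : Summable E := by
    have h1 : Summable (fun j => C j / T) := hCs.div_const T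
    have h2 : Summable (fun j => D j / R) := hDs.div_const R
    have h3 : Summable (fun j : ℕ => K * 2 ^ j * L j / T) := by
      have : (fun j : ℕ => K * 2 ^ j * L j / T) = fun j : ℕ => (2 ^ j * L j) * (K / T) := by
        funext j; ring
      rw [this]; exact hLs.mul_right _
    exact (h1.add h2).add h3
  -- tsum of E bound
  have hEsum : ∑' j : ℕ, E j ≤ (Cb + K * Lb) / T + Db / R := by
    have h1 : Summable (fun j => C j / T) := hCs.div_const T
    have h2 : Summable (fun j => D j / R) := hDs.div_const R
    have h3 : Summable (fun j : ℕ => K * 2 ^ j * L j / T) := by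
      have : (fun j : ℕ => K * 2 ^ j * L j / T) = fun j : ℕ => (2 ^ j * L j) * (K / T) := by
        funext j; ring
      rw [this]; exact hLs.mul_right _
    have e1 : ∑' j : ℕ, E j = (∑' j, C j / T) + (∑' j, D j / R)
        + ∑' j : ℕ, K * 2 ^ j * L j / T := by
      simp only [hE_def]
      rw [Summable.tsum_add (h1.add h2) h3, Summable.tsum_add h1 h2]
    have e2 : ∑' j : ℕ, C j / T = (∑' j, C j) / T := tsum_div_const
    have e3 : ∑' j : ℕ, D j / R = (∑' j, D j) / R := tsum_div_const
    have e4 : ∑' j : ℕ, K * 2 ^ j * L j / T = (∑' j : ℕ, 2 ^ j * L j) * (K / T) := by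
      rw [← tsum_mul_right]
      congr 1; funext j; ring
    have b1 : (∑' j, C j) / T ≤ Cb / T := by gcongr
    have b2 : (∑' j, D j) / R ≤ Db / R := by gcongr
    have b3 : (∑' j : ℕ, 2 ^ j * L j) * (K / T) ≤ Lb * (K / T) :=
      mul_le_mul_of_nonneg_right hLsum (div_nonneg hK hT.le)
    rw [e1, e2, e3, e4]
    have hid : (Cb + K * Lb) / T + Db / R = Cb / T + Db / R + Lb * (K / T) := by ring
    linarith [b1, b2, b3]
  -- conclude
  have hgoal : |(∑' j, A j) - ∑' j, B j| ≤ ∑' j, E j := by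
    rw [← Summable.tsum_sub hAsum hBsum]
    calc |∑' j, (A j - B j)| ≤ ∑' j, |A j - B j| := by
          simpa using norm_tsum_le_tsum_norm (f := fun j => A j - B j)
            (by
              simp only [Real.norm_eq_abs]
              exact Summable.of_nonneg_of_le (fun j => abs_nonneg _) hper hEs)
      _ ≤ ∑' j, E j :=
          Summable.tsum_le_tsum hper (Summable.of_nonneg_of_le (fun j => abs_nonneg _) hper hEs) hEs
  exact hgoal.trans hEsum
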